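/- Let ν be a probability measure on a finite set X, let 𝒢 be a finite set of functions g : X → ℝ, and let ḡ = ∑_{g ∈ 𝒢} α_g g be a convex combination. Suppose K > 0 satisfies ‖ḡ − g‖_2 ≤ K for every g ∈ 𝒢, where ‖f‖_2 = (E_{x ← ν}|f(x)|^2)^{1/2}. Then for every positive integer ℓ there exist g_1, …, g_ℓ ∈ 𝒢 (with repetition allowed) such that ‖ḡ − (1/ℓ)∑_{i=1}^ℓ g_i‖_2 ≤ K/√ℓ. -/

import Mathlib

open Finset

/-- Maurey–Jones–Barron approximate Carathéodory theorem in `L²(ν)` on a finite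
probability space: a convex combination `ḡ = ∑ α_g · g` of functions from a
finite family, each within `L²` distance `K` of `ḡ`, admits for every `ℓ ≥ 1`
an `ℓ`-term average approximation with error at most `K/√ℓ`. -/
theorem maurey_L2_approx {X ι : Type*} [Fintype X] [Fintype ι] [Nonempty ι]
    (ν : X → ℝ) (hν0 : ∀ x, 0 ≤ ν x) (hν1 : ∑ x, ν x = 1)
    (G : ι → X → ℝ) (α : ι → ℝ) (hα0 : ∀ i, 0 ≤ α i) (hα1 : ∑ i, α i = 1)
    (K : ℝ) (hK : 0 < K)
    (hdist : ∀ i, Real.sqrt (∑ x, ν x * ((∑ j, α j * G j x) - G i x) ^ 2) ≤ K)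
    (ℓ : ℕ) (hℓ : 0 < ℓ) :
    ∃ g : Fin ℓ → ι,
      Real.sqrt (∑ x, ν x *
          ((∑ j, α j * G j x) - (ℓ : ℝ)⁻¹ * ∑ i, G (g i) x) ^ 2) ≤
        K / Real.sqrt ℓ := by
  classical
  have hl0 : (0:ℝ) < (ℓ:ℝ) := by exact_mod_cast hℓ
  have hl : (ℓ:ℝ) ≠ 0 := ne_of_gt hl0
  set gb : X → ℝ := fun x => ∑ j, α j * G j x with hgb
  set D : ι → X → ℝ := fun j x => gb x - G j x with hDdef
  set w : (Fin ℓ → ι) → ℝ := fun g => ∏ i, α (g i) with hw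
  set F : (Fin ℓ → ι) → ℝ :=
    fun g => ∑ x, ν x * (gb x - (ℓ : ℝ)⁻¹ * ∑ i, G (g i) x) ^ 2 with hF
  have hw0 : ∀ g, 0 ≤ w g := fun g => Finset.prod_nonneg fun i _ => hα0 _
  have hwsum : ∑ g : Fin ℓ → ι, w g = 1 := by
    calc ∑ g : Fin ℓ → ι, w g
        = ∑ g ∈ Fintype.piFinset (fun _ : Fin ℓ => (univ : Finset ι)),
            ∏ i, α (g i) := by rw [Fintype.piFinset_univ]
      _ = ∏ _i : Fin ℓ, ∑ j, α j := (Finset.prod_univ_sum _ _).symm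
      _ = 1 := by simp [hα1]
  have hmean : ∀ x, ∑ j, α j * D j x = 0 := by
    intro x
    have : ∑ j, α j * D j x = (∑ j, α j) * gb x - ∑ j, α j * G j x := by
      simp only [hDdef, mul_sub, Finset.sum_sub_distrib, Finset.sum_mul]
    rw [this, hα1, one_mul, hgb]
    ring
  have hsec : ∀ j, ∑ x, ν x * D j x ^ 2 ≤ K ^ 2 := by
    intro j
    have h1 : 0 ≤ ∑ x, ν x * D j x ^ 2 :=
      Finset.sum_nonneg fun x _ => mul_nonneg (hν0 x) (sq_nonneg _)
    have h2 := hdist j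
    have h3 : Real.sqrt (∑ x, ν x * D j x ^ 2) ≤ K := h2
    nlinarith [Real.sq_sqrt h1, Real.sqrt_nonneg (∑ x, ν x * D j x ^ 2)]
  have hrepr : ∀ (g : Fin ℓ → ι) x,
      gb x - (ℓ : ℝ)⁻¹ * ∑ i, G (g i) x = (ℓ : ℝ)⁻¹ * ∑ i, D (g i) x := by
    intro g x
    simp only [hDdef]
    rw [Finset.sum_sub_distrib, Finset.sum_const, Finset.card_univ,
      Fintype.card_fin, nsmul_eq_mul, mul_sub, ← mul_assoc,
      inv_mul_cancel₀ hl, one_mul]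
  -- covariance computation
  have hT : ∀ (i i' : Fin ℓ) (x : X),
      ∑ g : Fin ℓ → ι, w g * (D (g i) x * D (g i') x)
        = if i = i' then ∑ j, α j * D j x ^ 2 else 0 := by
    intro i i' x
    set f : Fin ℓ → ι → ℝ := fun k j =>
      α j * ((if k = i then D j x else 1) * (if k = i' then D j x else 1)) with hf
    have hprod : ∀ g : Fin ℓ → ι,
        ∏ k, f k (g k) = w g * (D (g i) x * D (g i') x) := by
      intro g
      simp only [hf]
      rw [Finset.prod_mul_distrib, Finset.prod_mul_distrib,
        Finset.prod_ite_eq' univ i (fun k => D (g k) x),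
        Finset.prod_ite_eq' univ i' (fun k => D (g k) x)]
      simp [hw]
    have hpi : ∑ g : Fin ℓ → ι, w g * (D (g i) x * D (g i') x)
        = ∏ k, ∑ j, f k j := by
      calc ∑ g : Fin ℓ → ι, w g * (D (g i) x * D (g i') x)
          = ∑ g : Fin ℓ → ι, ∏ k, f k (g k) :=
            Finset.sum_congr rfl fun g _ => (hprod g).symm
        _ = ∑ g ∈ Fintype.piFinset (fun _ : Fin ℓ => (univ : Finset ι)),
              ∏ k, f k (g k) := by rw [Fintype.piFinset_univ]
        _ = ∏ k, ∑ j, f k j := (Finset.prod_univ_sum _ _).symm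
    rw [hpi]
    by_cases hii : i = i'
    · subst hii
      simp only [if_pos rfl]
      rw [Finset.prod_eq_single_of_mem i (mem_univ i)]
      · refine Finset.sum_congr rfl fun j _ => ?_
        simp only [hf, eq_self_iff_true, if_true]
        ring
      · intro k _ hk
        simp [hf, hk, hα1]
    · rw [if_neg hii]
      refine Finset.prod_eq_zero (mem_univ i) ?_
      have hfi : ∑ j, f i j = ∑ j, α j * D j x := by
        refine Finset.sum_congr rfl fun j _ => ?_
        simp [hf, hii]
      rw [hfi, hmean x]
  -- second moment of the average
  have hx : ∀ x, ∑ g : Fin ℓ → ι, w g * (∑ i, D (g i) x) ^ 2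
      = (ℓ : ℝ) * ∑ j, α j * D j x ^ 2 := by
    intro x
    calc ∑ g : Fin ℓ → ι, w g * (∑ i, D (g i) x) ^ 2
        = ∑ g : Fin ℓ → ι, ∑ i, ∑ i', w g * (D (g i) x * D (g i') x) := by
          refine Finset.sum_congr rfl fun g _ => ?_
          rw [sq, Finset.sum_mul_sum]
          rw [Finset.mul_sum]
          refine Finset.sum_congr rfl fun i _ => ?_
          rw [Finset.mul_sum]
      _ = ∑ i : Fin ℓ, ∑ g : Fin ℓ → ι, ∑ i', w g * (D (g i) x * D (g i') x) :=
          Finset.sum_comm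
      _ = ∑ i : Fin ℓ, ∑ i' : Fin ℓ, ∑ g : Fin ℓ → ι,
            w g * (D (g i) x * D (g i') x) :=
          Finset.sum_congr rfl fun i _ => Finset.sum_comm
      _ = ∑ i : Fin ℓ, ∑ i' : Fin ℓ,
            (if i = i' then ∑ j, α j * D j x ^ 2 else 0) :=
          Finset.sum_congr rfl fun i _ => Finset.sum_congr rfl fun i' _ => hT i i' x
      _ = ∑ _i : Fin ℓ, ∑ j, α j * D j x ^ 2 := by
          refine Finset.sum_congr rfl fun i _ => ?_
          simp
      _ = (ℓ : ℝ) * ∑ j, α j * D j x ^ 2 := by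
          rw [Finset.sum_const, Finset.card_univ, Fintype.card_fin, nsmul_eq_mul]
  -- key expectation bound
  have key : ∑ g : Fin ℓ → ι, w g * F g ≤ K ^ 2 / ℓ := by
    have e1 : ∑ g : Fin ℓ → ι, w g * F g
        = (ℓ : ℝ)⁻¹ * ∑ j, α j * ∑ x, ν x * D j x ^ 2 := by
      calc ∑ g : Fin ℓ → ι, w g * F g
          = ∑ g : Fin ℓ → ι, ∑ x,
              ν x * (((ℓ:ℝ)⁻¹)^2 * (w g * (∑ i, D (g i) x) ^ 2)) := by
            refine Finset.sum_congr rfl fun g _ => ?_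
            simp only [hF]
            rw [Finset.mul_sum]
            refine Finset.sum_congr rfl fun x _ => ?_
            rw [hrepr g x]
            ring
        _ = ∑ x, ∑ g : Fin ℓ → ι,
              ν x * (((ℓ:ℝ)⁻¹)^2 * (w g * (∑ i, D (g i) x) ^ 2)) :=
            Finset.sum_comm
        _ = ∑ x, ν x * (((ℓ:ℝ)⁻¹)^2 * ((ℓ:ℝ) * ∑ j, α j * D j x ^ 2)) := by
            refine Finset.sum_congr rfl fun x _ => ?_
            simp only [← Finset.mul_sum]
            rw [hx x]
        _ = (ℓ : ℝ)⁻¹ * ∑ x, ν x * ∑ j, α j * D j x ^ 2 := by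
            rw [Finset.mul_sum]
            refine Finset.sum_congr rfl fun x _ => ?_
            field_simp
        _ = (ℓ : ℝ)⁻¹ * ∑ j, α j * ∑ x, ν x * D j x ^ 2 := by
            congr 1
            simp only [Finset.mul_sum]
            rw [Finset.sum_comm]
            exact Finset.sum_congr rfl fun j _ =>
              Finset.sum_congr rfl fun x _ => by ring
    rw [e1]
    have hb : ∑ j, α j * ∑ x, ν x * D j x ^ 2 ≤ K ^ 2 := by
      calc ∑ j, α j * ∑ x, ν x * D j x ^ 2 ≤ ∑ j, α j * K ^ 2 :=
            Finset.sum_le_sum fun j _ =>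
              mul_le_mul_of_nonneg_left (hsec j) (hα0 j)
        _ = K ^ 2 := by rw [← Finset.sum_mul, hα1, one_mul]
    calc (ℓ : ℝ)⁻¹ * ∑ j, α j * ∑ x, ν x * D j x ^ 2
        ≤ (ℓ : ℝ)⁻¹ * K ^ 2 :=
          mul_le_mul_of_nonneg_left hb (by positivity)
      _ = K ^ 2 / ℓ := by rw [div_eq_mul_inv, mul_comm]
  -- extract a good g
  have hFnn : ∀ g, 0 ≤ F g := fun g =>
    Finset.sum_nonneg fun x _ => mul_nonneg (hν0 x) (sq_nonneg _)
  obtain ⟨g, hg⟩ : ∃ g : Fin ℓ → ι, F g ≤ K ^ 2 / ℓ := by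
    by_contra h
    push_neg at h
    have hg0 : ∃ g₀ : Fin ℓ → ι, 0 < w g₀ := by
      by_contra hc
      push_neg at hc
      have hz : ∑ g : Fin ℓ → ι, w g = 0 :=
        Finset.sum_eq_zero fun g _ => le_antisymm (hc g) (hw0 g)
      rw [hwsum] at hz
      norm_num at hz
    obtain ⟨g₀, hg₀⟩ := hg0
    have hlt : ∑ g : Fin ℓ → ι, w g * (K ^ 2 / ℓ) < ∑ g : Fin ℓ → ι, w g * F g :=
      Finset.sum_lt_sum (fun g _ => mul_le_mul_of_nonneg_left (h g).le (hw0 g))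
        ⟨g₀, mem_univ g₀, mul_lt_mul_of_pos_left (h g₀) hg₀⟩
    rw [← Finset.sum_mul, hwsum, one_mul] at hlt
    linarith
  refine ⟨g, ?_⟩
  calc Real.sqrt (∑ x, ν x * (gb x - (ℓ : ℝ)⁻¹ * ∑ i, G (g i) x) ^ 2)
      = Real.sqrt (F g) := rfl
    _ ≤ Real.sqrt (K ^ 2 / ℓ) := Real.sqrt_le_sqrt hg
    _ = K / Real.sqrt ℓ := by
        rw [Real.sqrt_div (sq_nonneg K), Real.sqrt_sq hK.le]
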